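/- Let n ≥ 1, let d₁,…,d_n be reals with d_n < 0, let u ∈ ℝ^n, σ > 0, η > 0, ρ ≥ 0, and for s ≥ 0 define Error_s(k) = (1/n)·Σ_{i=1}^n (1 − ηd_i − η·s·d_i²)^{2k} d_i² u_i² + (σ²/n)·Σ_{i=1}^n (1 − (1 − ηd_i − η·s·d_i²)^k)². Then: (1) the gradient descent error diverges, i.e. Error₀(k) → ∞ as k → ∞; and (2) if in addition |1 − ηd_i − ηρd_i²| ≤ 1 for every i, then the SAM error stays bounded, i.e. there is a constant C with Error_ρ(k) ≤ C for all k. -/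

import Mathlib

/-- In the indefinite kernel setting (some eigenvalue `d_n < 0`), the gradient descent
error diverges as `k → ∞`, while if `|1 − ηd_i − ηρd_i²| ≤ 1` for all `i` the SAM error
stays bounded. -/
theorem gd_error_diverges_sam_bounded (n : ℕ) (hn : 0 < n)
    (d u : Fin n → ℝ)
    (hdn : d ⟨n - 1, Nat.sub_lt hn Nat.one_pos⟩ < 0)
    (σ : ℝ) (hσ : 0 < σ)
    (η ρ : ℝ) (hη : 0 < η) (hρ : 0 ≤ ρ)
    (Err : ℝ → ℕ → ℝ)
    (hErr : ∀ s k, Err s k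
        = (1 / (n : ℝ)) *
            (∑ i, (1 - η * d i - η * s * d i ^ 2) ^ (2 * k) * d i ^ 2 * u i ^ 2)
          + (σ ^ 2 / (n : ℝ)) *
            (∑ i, (1 - (1 - η * d i - η * s * d i ^ 2) ^ k) ^ 2)) :
    Filter.Tendsto (Err 0) Filter.atTop Filter.atTop ∧
    ((∀ i, |1 - η * d i - η * ρ * d i ^ 2| ≤ 1) →
      ∃ C : ℝ, ∀ k : ℕ, Err ρ k ≤ C) := by
  have hnR : (0:ℝ) < n := by exact_mod_cast hn
  constructor
  · -- divergence
    set i0 : Fin n := ⟨n - 1, Nat.sub_lt hn Nat.one_pos⟩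
    set a : ℝ := 1 - η * d i0 with ha_def
    have ha : 1 < a := by
      have : 0 < η * (-d i0) := mul_pos hη (by linarith)
      simp only [ha_def]; nlinarith
    have hc : 0 < σ ^ 2 / (n : ℝ) := div_pos (pow_pos hσ 2) hnR
    have hg : Filter.Tendsto (fun k : ℕ => (a : ℝ) ^ k - 1) Filter.atTop Filter.atTop :=
      Filter.tendsto_atTop_add_const_right _ _ (tendsto_pow_atTop_atTop_of_one_lt ha)
    have hsq : Filter.Tendsto (fun k : ℕ => (σ ^ 2 / (n : ℝ)) * (a ^ k - 1) ^ 2)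
        Filter.atTop Filter.atTop := by
      have := (hg.atTop_mul_atTop₀ hg).const_mul_atTop hc
      convert this using 2 with k
      ring
    refine Filter.tendsto_atTop_mono (fun k => ?_) hsq
    rw [hErr]
    have h1 : (0:ℝ) ≤ (1 / (n : ℝ)) *
        (∑ i, (1 - η * d i - η * 0 * d i ^ 2) ^ (2 * k) * d i ^ 2 * u i ^ 2) := by
      apply mul_nonneg (by positivity)
      apply Finset.sum_nonneg
      intro i _
      have : (1 - η * d i - η * 0 * d i ^ 2) ^ (2 * k) = ((1 - η * d i - η * 0 * d i ^ 2) ^ k) ^ 2 := by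
        rw [← pow_mul]; ring_nf
      rw [this]; positivity
    have h2 : (a ^ k - 1) ^ 2 ≤ ∑ i, (1 - (1 - η * d i - η * 0 * d i ^ 2) ^ k) ^ 2 := by
      have := Finset.single_le_sum
        (f := fun i => (1 - (1 - η * d i - η * 0 * d i ^ 2) ^ k) ^ 2)
        (fun i _ => sq_nonneg _) (Finset.mem_univ i0)
      calc (a ^ k - 1) ^ 2 = (1 - (1 - η * d i0 - η * 0 * d i0 ^ 2) ^ k) ^ 2 := by
            simp only [ha_def]; ring_nf
        _ ≤ _ := this
    nlinarith [mul_le_mul_of_nonneg_left h2 hc.le]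
  · -- boundedness
    intro hb
    refine ⟨(1 / (n : ℝ)) * (∑ i, d i ^ 2 * u i ^ 2) + (σ ^ 2 / (n : ℝ)) * (∑ _i : Fin n, (4:ℝ)), fun k => ?_⟩
    rw [hErr]
    have hc : 0 < σ ^ 2 / (n : ℝ) := div_pos (pow_pos hσ 2) hnR
    have hA : ∑ i, (1 - η * d i - η * ρ * d i ^ 2) ^ (2 * k) * d i ^ 2 * u i ^ 2
        ≤ ∑ i, d i ^ 2 * u i ^ 2 := by
      apply Finset.sum_le_sum
      intro i _
      have h := hb i
      have h1 : (1 - η * d i - η * ρ * d i ^ 2) ^ (2 * k) ≤ 1 := by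
        calc (1 - η * d i - η * ρ * d i ^ 2) ^ (2 * k)
            ≤ |1 - η * d i - η * ρ * d i ^ 2| ^ (2 * k) := by
              rw [← abs_pow]; exact le_abs_self _
          _ ≤ 1 ^ (2 * k) := pow_le_pow_left₀ (abs_nonneg _) h _
          _ = 1 := one_pow _
      nlinarith [sq_nonneg (d i * u i), sq_nonneg (d i), sq_nonneg (u i),
        mul_nonneg (sq_nonneg (d i)) (sq_nonneg (u i))]
    have hB : ∑ i, (1 - (1 - η * d i - η * ρ * d i ^ 2) ^ k) ^ 2
        ≤ ∑ _i : Fin n, (4:ℝ) := by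
      apply Finset.sum_le_sum
      intro i _
      have h := hb i
      have hp : |(1 - η * d i - η * ρ * d i ^ 2) ^ k| ≤ 1 := by
        rw [abs_pow]
        calc |1 - η * d i - η * ρ * d i ^ 2| ^ k ≤ 1 ^ k :=
              pow_le_pow_left₀ (abs_nonneg _) h _
          _ = 1 := one_pow _
      have := abs_le.mp hp
      nlinarith
    have h1n : (0:ℝ) ≤ 1 / (n : ℝ) := by positivity
    exact add_le_add (mul_le_mul_of_nonneg_left hA h1n)
      (mul_le_mul_of_nonneg_left hB hc.le)
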